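/- arXiv:1607.07098 — 3 statements merged into one kernel-verified Lean document; each statement's English description precedes it below -/
import Mathlib

section
/- For 0 < α < 1 and every integer n ≥ 1, the coefficient l_{n-1}^α = ∑_{k=0}^{n-1} (-1)^k binom(α,k) satisfies the lower bound l_{n-1}^α ≥ 1/(n^α · Γ(1-α)). -/
noncomputable def binom (α : ℝ) (k : ℕ) : ℝ :=
  (∏ i ∈ Finset.range k, (α - i)) / (Nat.factorial k)

noncomputable def g (α : ℝ) (k : ℕ) : ℝ := (-1) ^ k * binom α k

noncomputable def lcoef (α : ℝ) (n : ℕ) : ℝ := ∑ k ∈ Finset.range (n + 1), g α k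

lemma lcoef_eq (α : ℝ) (n : ℕ) :
    lcoef α n = (∏ i ∈ Finset.range n, ((i : ℝ) + 1 - α)) / (Nat.factorial n) := by
  induction n with
  | zero => simp [lcoef, g, binom]
  | succ n ih =>
      have h1 : lcoef α (n + 1) = lcoef α n + g α (n + 1) := by
        simp [lcoef, Finset.sum_range_succ]
      have h2 : (∏ i ∈ Finset.range (n + 1), (α - (i : ℝ)))
          = (-1) ^ (n + 1) * ∏ i ∈ Finset.range (n + 1), ((i : ℝ) - α) := by
        calc (∏ i ∈ Finset.range (n + 1), (α - (i : ℝ)))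
            = ∏ i ∈ Finset.range (n + 1), ((-1) * ((i : ℝ) - α)) :=
              Finset.prod_congr rfl (fun i _ => by ring)
          _ = (-1) ^ (n + 1) * ∏ i ∈ Finset.range (n + 1), ((i : ℝ) - α) := by
              rw [Finset.prod_mul_distrib, Finset.prod_const, Finset.card_range]
      have h3 : (∏ i ∈ Finset.range (n + 1), ((i : ℝ) - α))
          = -α * ∏ i ∈ Finset.range n, ((i : ℝ) + 1 - α) := by
        rw [Finset.prod_range_succ']
        have heq : (∏ i ∈ Finset.range n, (((i : ℕ) + 1 : ℝ) - α))
            = ∏ i ∈ Finset.range n, ((i : ℝ) + 1 - α) :=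
          Finset.prod_congr rfl (fun i _ => by push_cast; ring)
        push_cast
        push_cast at heq
        rw [heq]; ring
      have h4 : g α (n + 1)
          = -α * (∏ i ∈ Finset.range n, ((i : ℝ) + 1 - α)) / (Nat.factorial (n + 1)) := by
        rw [g, binom, h2, h3]
        rw [show ((-1 : ℝ)) ^ (n + 1) * ((-1) ^ (n + 1) * (-α * ∏ i ∈ Finset.range n, ((i : ℝ) + 1 - α)) / (Nat.factorial (n + 1))) = ((-1 : ℝ)) ^ (n + 1) * ((-1) ^ (n + 1)) * (-α * ∏ i ∈ Finset.range n, ((i : ℝ) + 1 - α)) / (Nat.factorial (n + 1)) by ring]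
        rw [← pow_add, Even.neg_one_pow ⟨n + 1, by ring⟩, one_mul]
      rw [h1, ih, h4, Finset.prod_range_succ]
      have hf : (Nat.factorial (n + 1) : ℝ) = (n + 1) * Nat.factorial n := by
        push_cast [Nat.factorial_succ]; ring
      have hfn : (Nat.factorial n : ℝ) ≠ 0 := by positivity
      have hfn1 : ((n : ℝ) + 1) ≠ 0 := by positivity
      rw [hf]
      field_simp
      ring

lemma gamma_prod (α : ℝ) (hα1 : α < 1) (n : ℕ) :
    Real.Gamma ((n : ℝ) + 1 - α)
      = (∏ i ∈ Finset.range n, ((i : ℝ) + 1 - α)) * Real.Gamma (1 - α) := by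
  induction n with
  | zero => simp
  | succ n ih =>
      have hne : (n : ℝ) + 1 - α ≠ 0 := by
        have : (0 : ℝ) < (n : ℝ) + 1 - α := by
          have : (0 : ℝ) ≤ (n : ℝ) := Nat.cast_nonneg n
          linarith
        linarith
      have : ((n : ℕ) + 1 : ℝ) + 1 - α = ((n : ℝ) + 1 - α) + 1 := by push_cast; ring
      rw [show ((n + 1 : ℕ) : ℝ) + 1 - α = ((n : ℝ) + 1 - α) + 1 by push_cast; ring]
      rw [Real.Gamma_add_one hne, ih, Finset.prod_range_succ]
      ring

lemma gamma_gautschi (α : ℝ) (hα0 : 0 < α) (hα1 : α < 1) (x : ℝ) (hx : 1 ≤ x) :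
    Real.Gamma x ≤ Real.Gamma (x - α) * x ^ α := by
  have hxa : 0 < x - α := by linarith
  have hxa1 : 0 < x - α + 1 := by linarith
  have hcomb : (1 - α) * (x - α) + α * (x - α + 1) = x := by ring
  have hconv := Real.convexOn_log_Gamma.2 (Set.mem_Ioi.mpr hxa) (Set.mem_Ioi.mpr hxa1)
    (by linarith : (0:ℝ) ≤ 1 - α) (le_of_lt hα0) (by ring)
  simp only [smul_eq_mul, Function.comp] at hconv
  rw [hcomb] at hconv
  have hG1 : Real.Gamma (x - α + 1) = (x - α) * Real.Gamma (x - α) :=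
    Real.Gamma_add_one (ne_of_gt hxa)
  have hGpos : 0 < Real.Gamma (x - α) := Real.Gamma_pos_of_pos hxa
  have hGpos1 : 0 < Real.Gamma (x - α + 1) := Real.Gamma_pos_of_pos hxa1
  have hlog1 : Real.log (Real.Gamma (x - α + 1))
      = Real.log (x - α) + Real.log (Real.Gamma (x - α)) := by
    rw [hG1, Real.log_mul (ne_of_gt hxa) (ne_of_gt hGpos)]
  have key : Real.log (Real.Gamma x)
      ≤ Real.log (Real.Gamma (x - α)) + α * Real.log (x - α) := by
    rw [hlog1] at hconv; nlinarith [hconv]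
  have hGxpos : 0 < Real.Gamma x := Real.Gamma_pos_of_pos (by linarith)
  have h2 : Real.Gamma x ≤ Real.Gamma (x - α) * (x - α) ^ α := by
    have := Real.exp_le_exp.mpr key
    rw [Real.exp_log hGxpos, Real.exp_add, Real.exp_log hGpos] at this
    rw [Real.rpow_def_of_pos hxa, mul_comm (Real.log (x - α)) α]
    exact this
  have h3 : (x - α) ^ α ≤ x ^ α :=
    Real.rpow_le_rpow (le_of_lt hxa) (by linarith) (le_of_lt hα0)
  calc Real.Gamma x ≤ Real.Gamma (x - α) * (x - α) ^ α := h2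
    _ ≤ Real.Gamma (x - α) * x ^ α := by
        exact mul_le_mul_of_nonneg_left h3 (le_of_lt hGpos)

theorem stmt_4 (α : ℝ) (hα0 : 0 < α) (hα1 : α < 1) :
    ∀ n : ℕ, 1 ≤ n →
      1 / ((n : ℝ) ^ α * Real.Gamma (1 - α)) ≤ lcoef α (n - 1) := by
  intro n hn
  obtain ⟨m, rfl⟩ := Nat.exists_eq_add_of_le hn
  simp only [Nat.add_sub_cancel_left, add_comm 1 m, Nat.add_sub_cancel]
  rw [lcoef_eq]
  have hGa : 0 < Real.Gamma (1 - α) := Real.Gamma_pos_of_pos (by linarith)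
  have hx : (1 : ℝ) ≤ (m : ℝ) + 1 := by
    have : (0 : ℝ) ≤ (m : ℝ) := Nat.cast_nonneg m
    linarith
  have hgau := gamma_gautschi α hα0 hα1 ((m : ℝ) + 1) hx
  have hGam : Real.Gamma ((m : ℝ) + 1) = Nat.factorial m := Real.Gamma_nat_eq_factorial m
  have hprodG := gamma_prod α hα1 m
  have hGxa : 0 < Real.Gamma ((m : ℝ) + 1 - α) := Real.Gamma_pos_of_pos (by
    have : (0 : ℝ) ≤ (m : ℝ) := Nat.cast_nonneg m
    linarith)
  -- Γ(m+1-α) = P * Γ(1-α), so P = Γ(m+1-α)/Γ(1-α)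
  have hP : (∏ i ∈ Finset.range m, ((i : ℝ) + 1 - α))
      = Real.Gamma ((m : ℝ) + 1 - α) / Real.Gamma (1 - α) := by
    rw [hprodG]; field_simp
  rw [hP]
  have hpow : (0 : ℝ) < ((m : ℝ) + 1) ^ α := Real.rpow_pos_of_pos (by linarith) α
  have hfac : (0 : ℝ) < (Nat.factorial m : ℝ) := by positivity
  -- goal: 1/((m+1)^α Γ(1-α)) ≤ (Γ(m+1-α)/Γ(1-α)) / m!
  rw [div_div, div_le_div_iff₀ (by positivity) (by positivity), one_mul]
  -- Γ(1-α) * m! ≤ Γ(m+1-α) * ((m+1)^α * Γ(1-α))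
  have key : (Nat.factorial m : ℝ) ≤ Real.Gamma ((m : ℝ) + 1 - α) * ((m : ℝ) + 1) ^ α := by
    calc (Nat.factorial m : ℝ) = Real.Gamma ((m : ℝ) + 1) := hGam.symm
      _ ≤ Real.Gamma (((m : ℝ) + 1) - α) * ((m : ℝ) + 1) ^ α := hgau
  push_cast
  push_cast at key
  nlinarith [key, hGa, hGxa, hpow]
end

section
/- Let 0 < α < 1, λ ∈ ℂ, τ > 0, r ∈ ℝ. For f ∈ L¹(ℝ) with Fourier transform f̂, the Fourier transform of A_{τ,r}^{α,λ} f(t) = τ^{-α} ∑_{k=0}^∞ e^{-λ(k-r)τ} g_k^α f(t - (k-r)τ) equals (λ - iω)^α · W_{α,r}((λ - iω)τ) · f̂(ω), where W_{α,r}(z) = ((1 - e^{-z})/z)^α e^{rz}. -/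
open Complex MeasureTheory

/-- `W_{α,r}(z) = ((1 - e^{-z})/z)^α e^{rz}` (principal branch). -/
noncomputable def W (α r : ℝ) (z : ℂ) : ℂ :=
  ((1 - Complex.exp (-z)) / z) ^ (α : ℂ) * Complex.exp (r * z)

/-- `A_{τ,r}^{α,λ} f (t) = τ^{-α} ∑_{k=0}^∞ e^{-λ(k-r)τ} g_k^α f(t-(k-r)τ)`. -/
noncomputable def Aop (α : ℝ) (lam : ℂ) (τ r : ℝ) (f : ℝ → ℂ) (t : ℝ) : ℂ :=
  (τ : ℂ) ^ (-(α : ℂ)) *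
    ∑' k : ℕ, Complex.exp (-lam * ((k : ℝ) - r) * τ) * (g α k : ℂ) * f (t - ((k : ℝ) - r) * τ)

lemma prod_shift (α : ℝ) (k : ℕ) :
    ∏ i ∈ Finset.range (k+1), (α - i) = α * ∏ i ∈ Finset.range k, (α - 1 - i) := by
  rw [Finset.prod_range_succ' (fun i => α - (i:ℕ))]
  simp only [Nat.cast_zero, sub_zero, Nat.cast_add, Nat.cast_one]
  rw [mul_comm]
  congr 1
  exact Finset.prod_congr rfl fun i _ => by ring

lemma pascal (α : ℝ) (k : ℕ) : binom α (k+1) = binom (α-1) (k+1) + binom (α-1) k := by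
  unfold binom
  rw [prod_shift, Finset.prod_range_succ, Nat.factorial_succ]
  have hk : (Nat.factorial k : ℝ) ≠ 0 := Nat.cast_ne_zero.2 (Nat.factorial_ne_zero k)
  push_cast
  field_simp
  ring

lemma g_zero (α : ℝ) : g α 0 = 1 := by simp [g, binom]

lemma sum_g (α : ℝ) (n : ℕ) : ∑ k ∈ Finset.range (n+1), g α k = g (α-1) n := by
  induction n with
  | zero => simp [g_zero]
  | succ n ih =>
      rw [Finset.sum_range_succ, ih]
      simp only [g, pascal α n]
      ring

lemma g_shift_eq (α : ℝ) (n : ℕ) :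
    g (α-1) n = (∏ i ∈ Finset.range n, (1 + i - α)) / (Nat.factorial n) := by
  unfold g binom
  have h : ∏ i ∈ Finset.range n, (1 + (i:ℝ) - α) = (-1)^n * ∏ i ∈ Finset.range n, (α - 1 - (i:ℕ)) := by
    rw [← Finset.prod_congr rfl (fun i (_ : i ∈ Finset.range n) =>
      (by ring : (-1 : ℝ) * (α - 1 - (i:ℕ)) = 1 + i - α)), Finset.prod_mul_distrib]
    simp
  rw [h, mul_div_assoc]

lemma prod_range_fact (n : ℕ) : ∏ i ∈ Finset.range n, ((i:ℝ) + 1) = Nat.factorial n := by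
  induction n with
  | zero => simp
  | succ n ih => rw [Finset.prod_range_succ, ih, Nat.factorial_succ]; push_cast; ring

lemma g_shift_nonneg (hα0 : 0 < α) (hα1 : α < 1) (n : ℕ) : 0 ≤ g (α-1) n := by
  rw [g_shift_eq]
  apply div_nonneg _ (Nat.cast_nonneg _)
  exact Finset.prod_nonneg fun i _ => by have := (Nat.cast_nonneg (α := ℝ) i); linarith

lemma g_shift_le_one (hα0 : 0 < α) (hα1 : α < 1) (n : ℕ) : g (α-1) n ≤ 1 := by
  rw [g_shift_eq, div_le_one (by exact_mod_cast Nat.factorial_pos n)]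
  calc ∏ i ∈ Finset.range n, (1 + (i:ℝ) - α) ≤ ∏ i ∈ Finset.range n, ((i:ℝ) + 1) := by
        apply Finset.prod_le_prod
        · exact fun i _ => by have := (Nat.cast_nonneg (α := ℝ) i); linarith
        · exact fun i _ => by linarith
    _ = Nat.factorial n := prod_range_fact n

lemma g_succ_nonpos (hα0 : 0 < α) (hα1 : α < 1) (k : ℕ) : g α (k+1) ≤ 0 := by
  have h : g α (k+1) = -(α * ((∏ i ∈ Finset.range k, (1 + (i:ℝ) - α)) / Nat.factorial (k+1))) := by
    unfold g binom
    rw [prod_shift]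
    have h2 : ∏ i ∈ Finset.range k, (1 + (i:ℝ) - α) = (-1)^k * ∏ i ∈ Finset.range k, (α - 1 - (i:ℕ)) := by
      rw [← Finset.prod_congr rfl (fun i (_ : i ∈ Finset.range k) =>
        (by ring : (-1 : ℝ) * (α - 1 - (i:ℕ)) = 1 + i - α)), Finset.prod_mul_distrib]
      simp
    rw [h2]
    ring
  rw [h, neg_nonpos]
  apply mul_nonneg hα0.le
  apply div_nonneg _ (Nat.cast_nonneg _)
  exact Finset.prod_nonneg fun i _ => by have := (Nat.cast_nonneg (α := ℝ) i); linarith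

lemma summable_abs_g (hα0 : 0 < α) (hα1 : α < 1) : Summable (fun k => |g α k|) := by
  have h1 : Summable (fun k => |g α (k+1)|) := by
    have heq : ∀ k, |g α (k+1)| = -(g α (k+1)) := fun k =>
      abs_of_nonpos (g_succ_nonpos hα0 hα1 k)
    simp only [heq]
    apply summable_of_sum_range_le (c := 1) (fun n => by
      have := g_succ_nonpos hα0 hα1 n; linarith)
    intro n
    have : ∑ i ∈ Finset.range n, -(g α (i+1)) = g α 0 - ∑ k ∈ Finset.range (n+1), g α k := by
      rw [Finset.sum_range_succ' (fun k => g α k) n]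
      simp [Finset.sum_neg_distrib]
    rw [this, sum_g, g_zero]
    have := g_shift_nonneg hα0 hα1 n
    linarith
  exact (summable_nat_add_iff 1).mp h1

theorem binom_iter (α : ℝ) (n : ℕ) (x : ℂ) (hx : x ∈ Metric.ball (0:ℂ) 1) :
    iteratedDeriv n (fun y : ℂ => (1 - y) ^ (α:ℂ)) x
      = (∏ i ∈ Finset.range n, ((α:ℂ) - i)) * (-1)^n * (1 - x) ^ ((α:ℂ) - n) := by
  induction n generalizing x with
  | zero => simp [iteratedDeriv_zero]
  | succ n ih =>
      have hopen : IsOpen (Metric.ball (0:ℂ) 1) := Metric.isOpen_ball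
      have hev : (iteratedDeriv n (fun y : ℂ => (1 - y) ^ (α:ℂ)))
          =ᶠ[nhds x] (fun y => (∏ i ∈ Finset.range n, ((α:ℂ) - i)) * (-1)^n * (1 - y) ^ ((α:ℂ) - n)) := by
        filter_upwards [hopen.mem_nhds hx] with y hy using ih y hy
      rw [iteratedDeriv_succ, hev.deriv_eq]
      have hslit : (1 - x) ∈ Complex.slitPlane := by
        left
        have : x.re < 1 := lt_of_le_of_lt (Complex.re_le_norm x) (by simpa using hx)
        simpa using this
      have hd : HasDerivAt (fun y : ℂ => (1 - y) ^ ((α:ℂ) - n))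
          (((α:ℂ) - n) * (1 - x) ^ ((α:ℂ) - n - 1) * (-1)) x :=
        ((hasDerivAt_id x).const_sub 1).cpow_const hslit
      rw [((hd.const_mul ((∏ i ∈ Finset.range n, ((α:ℂ) - i)) * (-1)^n)).deriv)]
      rw [Finset.prod_range_succ]
      have : (α:ℂ) - ↑(n+1) = (α:ℂ) - n - 1 := by push_cast; ring
      rw [this]
      ring

theorem hasSum_open (α : ℝ) (x : ℂ) (hx : ‖x‖ < 1) :
    HasSum (fun k => ((g α k : ℝ) : ℂ) * x ^ k) ((1 - x) ^ (α:ℂ)) := by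
  set h : ℂ → ℂ := fun y => (1 - y) ^ (α:ℂ) with hh
  set ρ : ℝ := (1 + ‖x‖)/2 with hρ
  have hρ0 : 0 ≤ ρ := by positivity
  have hxρ : ‖x‖ < ρ := by rw [hρ]; linarith
  have hρ1 : ρ < 1 := by rw [hρ]; linarith
  set R : NNReal := ρ.toNNReal with hR
  have hRρ : (R : ℝ) = ρ := Real.coe_toNNReal ρ hρ0
  have hdiff : DifferentiableOn ℂ h (Metric.closedBall 0 (R:ℝ)) := by
    intro y hy
    have hy1 : ‖y‖ < 1 := by
      have : ‖y‖ ≤ (R:ℝ) := by simpa using hy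
      rw [hRρ] at this; linarith
    have hslit : (1 - y) ∈ Complex.slitPlane := by
      left
      have : y.re < 1 := lt_of_le_of_lt (Complex.re_le_norm y) hy1
      simpa using this
    exact (((hasDerivAt_id y).const_sub 1).cpow_const hslit).differentiableAt.differentiableWithinAt
  have hRpos : (0:NNReal) < R := by
    rw [← NNReal.coe_lt_coe, hRρ]
    simp only [NNReal.coe_zero]
    linarith [norm_nonneg x]
  have hball := hdiff.hasFPowerSeriesOnBall hRpos
  have hx' : x ∈ Metric.eball (0:ℂ) (R:ENNReal) := by
    rw [Metric.emetric_ball_nnreal]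
    simp only [Metric.mem_ball, dist_zero_right]
    rw [hRρ]; exact hxρ
  have hs := hball.hasSum_iteratedFDeriv hx'
  simp only [zero_add] at hs
  convert hs using 2 with n
  · rfl
  rw [iteratedFDeriv_apply_eq_iteratedDeriv_mul_prod]
  rw [binom_iter α n 0 (by simp)]
  simp only [Finset.prod_const, Finset.card_univ, Fintype.card_fin, sub_zero, one_cpow,
    smul_eq_mul, mul_one]
  rw [g, binom]
  push_cast
  ring

theorem tsum_binomial {α : ℝ} (hα0 : 0 < α) (hα1 : α < 1) (x : ℂ) (hx : ‖x‖ ≤ 1) :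
    ∑' k, ((g α k : ℝ) : ℂ) * x ^ k = (1 - x) ^ (α:ℂ) := by
  set t : ℕ → ℝ := fun n => 1 - 1/(n+1) with ht
  have ht0 : ∀ n, 0 ≤ t n := by
    intro n
    have h1 : 1/((n:ℝ)+1) ≤ 1 := by
      rw [div_le_one (by positivity)]; simp
    simp only [ht]; linarith
  have ht1 : ∀ n, t n < 1 := by
    intro n
    have : 0 < 1/((n:ℝ)+1) := by positivity
    simp only [ht]; linarith
  have htt : Filter.Tendsto t Filter.atTop (nhds 1) := by
    have := tendsto_one_div_add_atTop_nhds_zero_nat (𝕜 := ℝ)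
    have h2 := Filter.Tendsto.sub (f := fun _ : ℕ => (1:ℝ))
      (tendsto_const_nhds) this
    simp only [sub_zero] at h2
    exact h2
  set y : ℕ → ℂ := fun n => (t n : ℂ) * x with hy
  have hyx : Filter.Tendsto y Filter.atTop (nhds x) := by
    have : Filter.Tendsto (fun n => ((t n : ℝ) : ℂ)) Filter.atTop (nhds (1:ℂ)) := by
      exact (Complex.continuous_ofReal.tendsto 1).comp htt
    simpa [hy] using this.mul_const x
  have hyn : ∀ n, ‖y n‖ < 1 := by
    intro n
    rw [hy]
    simp only [norm_mul, Complex.norm_real, Real.norm_eq_abs, _root_.abs_of_nonneg (ht0 n)]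
    calc t n * ‖x‖ ≤ t n * 1 := by
          apply mul_le_mul_of_nonneg_left hx (ht0 n)
      _ < 1 := by rw [mul_one]; exact ht1 n
  -- limit 1 : tsums converge
  have hlim1 : Filter.Tendsto (fun n => ∑' k, ((g α k : ℝ) : ℂ) * (y n) ^ k)
      Filter.atTop (nhds (∑' k, ((g α k : ℝ) : ℂ) * x ^ k)) := by
    apply tendsto_tsum_of_dominated_convergence (bound := fun k => |g α k|)
      (summable_abs_g hα0 hα1)
    · intro k
      exact ((continuous_pow k).tendsto x).const_mul _ |>.comp hyx
    · filter_upwards with n k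
      rw [norm_mul, norm_pow]
      calc ‖((g α k:ℝ):ℂ)‖ * ‖y n‖ ^ k ≤ ‖((g α k:ℝ):ℂ)‖ * 1 := by
            apply mul_le_mul_of_nonneg_left _ (norm_nonneg _)
            exact pow_le_one₀ (norm_nonneg _) (hyn n).le
        _ = |g α k| := by simp
  -- limit 2
  have hcont : ContinuousAt (fun w : ℂ => w ^ (α:ℂ)) (1 - x) := by
    apply Complex.continuousAt_cpow_const_of_re_pos
    · left
      simp only [Complex.sub_re, Complex.one_re]
      have : x.re ≤ 1 := le_trans (Complex.re_le_norm x) hx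
      linarith
    · simpa using hα0
  have hlim2 : Filter.Tendsto (fun n => (1 - y n) ^ (α:ℂ)) Filter.atTop
      (nhds ((1 - x) ^ (α:ℂ))) :=
    hcont.tendsto.comp ((tendsto_const_nhds (x := (1:ℂ))).sub hyx)
  have heq : ∀ n, ∑' k, ((g α k : ℝ) : ℂ) * (y n) ^ k = (1 - y n) ^ (α:ℂ) := fun n =>
    (hasSum_open α (y n) (hyn n)).tsum_eq
  simp only [heq] at hlim1
  exact tendsto_nhds_unique hlim1 hlim2

open Real in
lemma cpow_aux (α : ℝ) {τ : ℝ} (hτ : 0 < τ) {u v : ℂ} (hu : u ≠ 0) (hv : v ≠ 0)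
    (harg : Complex.arg u + Complex.arg v ∈ Set.Ioc (-π) π) :
    ((τ:ℂ) * (u * v)) ^ (α:ℂ) = (τ:ℂ) ^ (α:ℂ) * (u ^ (α:ℂ) * v ^ (α:ℂ)) := by
  have hτC : (τ:ℂ) ≠ 0 := by exact_mod_cast hτ.ne'
  have huv : u * v ≠ 0 := mul_ne_zero hu hv
  have h1 : Complex.log ((τ:ℂ) * (u * v)) = Real.log τ + Complex.log (u * v) :=
    Complex.log_ofReal_mul hτ huv
  have h2 : Complex.log (u * v) = Complex.log u + Complex.log v :=
    Complex.log_mul hu hv harg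
  rw [Complex.cpow_def_of_ne_zero (mul_ne_zero hτC huv),
    Complex.cpow_def_of_ne_zero hτC, Complex.cpow_def_of_ne_zero hu,
    Complex.cpow_def_of_ne_zero hv, h1, h2, Complex.ofReal_log hτ.le,
    ← Complex.exp_add, ← Complex.exp_add]
  congr 1
  ring

open Real in
theorem branch (α : ℝ) (hα0 : 0 < α) {u : ℂ} (hu : u ≠ 0) (hre : 0 ≤ u.re)
    {τ : ℝ} (hτ : 0 < τ) :
    ((τ:ℂ)) ^ (-(α:ℂ)) * (1 - Complex.exp (-(u * (τ:ℂ)))) ^ (α:ℂ)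
      = u ^ (α:ℂ) * ((1 - Complex.exp (-(u * (τ:ℂ)))) / (u * (τ:ℂ))) ^ (α:ℂ) := by
  have hαC : ((α:ℂ)) ≠ 0 := by exact_mod_cast hα0.ne'
  have hτC : (τ:ℂ) ≠ 0 := by exact_mod_cast hτ.ne'
  have hπ := Real.pi_pos
  set z : ℂ := u * (τ:ℂ) with hz
  have hzne : z ≠ 0 := mul_ne_zero hu hτC
  set w : ℂ := 1 - Complex.exp (-z) with hw
  have hzre : 0 ≤ z.re := by
    rw [hz]
    simp only [Complex.mul_re, Complex.ofReal_re, Complex.ofReal_im, mul_zero, sub_zero]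
    positivity
  have hwre : 0 ≤ w.re := by
    rw [hw]
    simp only [Complex.sub_re, Complex.one_re, Complex.exp_re, Complex.neg_re, Complex.neg_im]
    have h1 : Real.exp (-z.re) ≤ 1 := Real.exp_le_one_iff.2 (by linarith)
    have h2 : Real.exp (-z.re) * Real.cos (-z.im) ≤ Real.exp (-z.re) * 1 :=
      mul_le_mul_of_nonneg_left (Real.cos_le_one _) (Real.exp_nonneg _)
    nlinarith [Real.exp_pos (-z.re)]
  by_cases hwz : w = 0
  · rw [hwz, Complex.zero_cpow hαC, zero_div, Complex.zero_cpow hαC]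
    ring
  set v : ℂ := w / z with hv0
  have hv : v ≠ 0 := div_ne_zero hwz hzne
  have huv : u * v = w / (τ:ℂ) := by
    rw [hv0, hz, mul_div_assoc']
    rw [mul_comm u (τ:ℂ), mul_comm u w]
    exact mul_div_mul_right w (τ:ℂ) hu
  have huvne : u * v ≠ 0 := mul_ne_zero hu hv
  have huvre : 0 ≤ (u * v).re := by
    rw [huv, Complex.div_ofReal_re]
    positivity
  have hwfac : w = (τ:ℂ) * (u * v) := by
    rw [huv, mul_div_assoc', mul_comm (τ:ℂ) w, mul_div_assoc, div_self hτC, mul_one]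
  have harg : Complex.arg u + Complex.arg v ∈ Set.Ioc (-π) π := by
    set A := Complex.arg u with hA
    set B := Complex.arg v with hB
    set C := Complex.arg (u * v) with hC
    have hAle : |A| ≤ π / 2 := Complex.abs_arg_le_pi_div_two_iff.2 hre
    have hCle : |C| ≤ π / 2 := Complex.abs_arg_le_pi_div_two_iff.2 huvre
    have hBmem : B ∈ Set.Ioc (-π) π := Complex.arg_mem_Ioc _
    have hangle : ((C : Real.Angle)) = ((A + B : ℝ) : Real.Angle) := by
      rw [hC]
      have h := Complex.arg_mul_coe_angle hu hv
      rw [h, hA, hB]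
      push_cast
      rfl
    rw [Real.Angle.angle_eq_iff_two_pi_dvd_sub] at hangle
    obtain ⟨k, hk⟩ := hangle
    rw [abs_le] at hAle hCle
    have hkk : A + B = C - 2 * π * k := by linarith
    have hk1 : (k:ℝ) < 1 := by
      by_contra h
      push_neg at h
      have hge : 2*π ≤ 2*π*(k:ℝ) := by nlinarith
      linarith [hBmem.1, hAle.1, hCle.2]
    have hk2 : (-2:ℝ) < k := by
      by_contra h
      push_neg at h
      have hle : 2*π*(k:ℝ) ≤ -4*π := by nlinarith
      linarith [hBmem.2, hAle.2, hCle.1]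
    have hk01 : k = 0 ∨ k = -1 := by
      have h1 : (k:ℤ) < 1 := by exact_mod_cast hk1
      have h2 : (-2:ℤ) < k := by exact_mod_cast hk2
      omega
    rcases hk01 with rfl | rfl
    · push_cast at hkk
      constructor
      · rw [hkk]; linarith [hCle.1]
      · rw [hkk]; linarith [hCle.2]
    · exfalso
      push_cast at hkk
      have hAeq : A = π/2 := by linarith [hBmem.2, hAle.2, hCle.1]
      have hBeq : B = π := by linarith [hBmem.2, hAle.2, hCle.1]
      have hu2 := Complex.arg_eq_pi_div_two_iff.1 hAeq
      have hv2 := Complex.arg_eq_pi_iff.1 hBeq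
      have hzre0 : z.re = 0 := by
        rw [hz]
        simp [Complex.mul_re, Complex.ofReal_re, Complex.ofReal_im, hu2.1]
      have hzim : z.im ≠ 0 := fun h => hzne (Complex.ext hzre0 h)
      have hns : Complex.normSq z ≠ 0 := by
        simpa [Complex.normSq_eq_zero] using hzne
      have h0 : v.im = 0 := hv2.2
      rw [hv0, Complex.div_im, hzre0] at h0
      simp only [mul_zero, zero_div, zero_sub, neg_eq_zero, div_eq_zero_iff] at h0
      have hwre0 : w.re = 0 := by
        rcases h0 with h | h
        · rcases mul_eq_zero.1 h with h' | h'
          · exact h'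
          · exact absurd h' hzim
        · exact absurd h hns
      have hcos : Real.cos z.im = 1 := by
        have hh : w.re = 1 - Real.exp (-z.re) * Real.cos (-z.im) := by
          rw [hw]
          simp [Complex.exp_re]
        rw [hwre0, hzre0] at hh
        simp [Real.cos_neg] at hh
        linarith
      have hsin : Real.sin z.im = 0 := by
        have h := Real.sin_sq_add_cos_sq z.im
        rw [hcos] at h
        nlinarith [sq_nonneg (Real.sin z.im)]
      have hwim0 : w.im = 0 := by
        rw [hw]
        simp only [Complex.sub_im, Complex.one_im, Complex.exp_im, Complex.neg_re,
          Complex.neg_im, hzre0]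
        simp [hsin]
      exact hwz (Complex.ext hwre0 hwim0)
  calc ((τ:ℂ)) ^ (-(α:ℂ)) * w ^ (α:ℂ)
      = ((τ:ℂ)) ^ (-(α:ℂ)) * ((τ:ℂ) * (u * v)) ^ (α:ℂ) := by rw [← hwfac]
    _ = ((τ:ℂ)) ^ (-(α:ℂ)) * ((τ:ℂ) ^ (α:ℂ) * (u ^ (α:ℂ) * v ^ (α:ℂ))) := by
        rw [cpow_aux α hτ hu hv harg]
    _ = ((τ:ℂ) ^ (-(α:ℂ)) * (τ:ℂ) ^ (α:ℂ)) * (u ^ (α:ℂ) * v ^ (α:ℂ)) := by ring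
    _ = u ^ (α:ℂ) * v ^ (α:ℂ) := by
        rw [← Complex.cpow_add _ _ hτC]
        simp

theorem stmt_8 (α : ℝ) (hα0 : 0 < α) (hα1 : α < 1) (lam : ℂ) (hlam : 0 ≤ lam.re)
    (τ : ℝ) (hτ : 0 < τ) (r : ℝ) (f : ℝ → ℂ) (hf : Integrable f) (ω : ℝ) :
    ∫ t : ℝ, Complex.exp (Complex.I * ω * t) * Aop α lam τ r f t =
      (lam - Complex.I * ω) ^ (α : ℂ) * W α r ((lam - Complex.I * ω) * τ) *
        ∫ t : ℝ, Complex.exp (Complex.I * ω * t) * f t := by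
  set u : ℂ := lam - Complex.I * ω with hu
  have hure : u.re = lam.re := by
    rw [hu]
    simp [Complex.sub_re, Complex.mul_re]
  set fhat : ℂ := ∫ t : ℝ, Complex.exp (Complex.I * ω * t) * f t with hfhat
  set c : ℕ → ℝ := fun k => ((k : ℝ) - r) * τ with hc
  set F : ℕ → ℝ → ℂ := fun k t =>
    Complex.exp (Complex.I * ω * t) * (Complex.exp (-lam * ((k : ℝ) - r) * τ) * (g α k : ℂ)
      * f (t - c k)) with hF
  -- pointwise rewrite of the integrand
  have hpt : ∀ t : ℝ, Complex.exp (Complex.I * ω * t) * Aop α lam τ r f t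
      = (τ : ℂ) ^ (-(α : ℂ)) * ∑' k, F k t := by
    intro t
    rw [Aop, mul_left_comm]
    congr 1
    rw [← tsum_mul_left]
    try exact tsum_congr fun k => by rw [hF]; try ring
  -- integrability of each term
  have hmeas : Continuous fun t : ℝ => Complex.exp (Complex.I * ω * t) := by
    fun_prop
  have hFint : ∀ k, Integrable (F k) := by
    intro k
    rw [hF]
    simp only
    refine (fun (hb : ∀ᵐ t : ℝ ∂volume, ‖Complex.exp (Complex.I * ω * t)‖ ≤ 1) (hg : Integrable (fun t : ℝ => Complex.exp (-lam * ((k : ℝ) - r) * τ) * (g α k : ℂ) * f (t - c k))) => Integrable.bdd_mul (c := 1) hg hmeas.aestronglyMeasurable hb) ?_ ?_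
    · refine Filter.Eventually.of_forall fun t => ?_
      rw [Complex.norm_exp]
      simp [Complex.mul_re]
    · exact ((hf.comp_sub_right (c k)).const_mul _)
  -- norm integrals
  have hnorm : ∀ k, (∫ t : ℝ, ‖F k t‖)
      = Real.exp (-lam.re * ((k:ℝ) - r) * τ) * |g α k| * ∫ t : ℝ, ‖f t‖ := by
    intro k
    have : ∀ t : ℝ, ‖F k t‖
        = Real.exp (-lam.re * ((k:ℝ) - r) * τ) * |g α k| * ‖f (t - c k)‖ := by
      intro t
      rw [hF]
      simp only [norm_mul, Complex.norm_exp]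
      rw [show (Complex.I * ω * t).re = 0 by simp [Complex.mul_re]]
      rw [show (-lam * ((k:ℝ) - r) * τ).re = -lam.re * ((k:ℝ) - r) * τ by
        simp [Complex.mul_re, Complex.neg_re]]
      simp only [Real.exp_zero, one_mul, Complex.norm_real, Real.norm_eq_abs]
      try ring
    simp_rw [this]
    rw [MeasureTheory.integral_const_mul]
    congr 1
    exact integral_sub_right_eq_self (fun t => ‖f t‖) (c k)
  have hsum : Summable fun k => ∫ t : ℝ, ‖F k t‖ := by
    have hs0 : Summable (fun k =>
        (Real.exp (lam.re * r * τ) * ∫ t : ℝ, ‖f t‖) * |g α k|) :=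
      (summable_abs_g hα0 hα1).mul_left _
    apply Summable.of_nonneg_of_le
      (fun k => integral_nonneg fun t => norm_nonneg _) (fun k => ?_) hs0
    rw [hnorm k]
    have h1 : Real.exp (-lam.re * ((k:ℝ) - r) * τ) ≤ Real.exp (lam.re * r * τ) := by
      apply Real.exp_le_exp.2
      have : 0 ≤ lam.re * k * τ := by positivity
      nlinarith
    have h2 : (0:ℝ) ≤ ∫ t : ℝ, ‖f t‖ := integral_nonneg fun t => norm_nonneg _
    calc Real.exp (-lam.re * ((k:ℝ) - r) * τ) * |g α k| * ∫ t : ℝ, ‖f t‖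
        ≤ Real.exp (lam.re * r * τ) * |g α k| * ∫ t : ℝ, ‖f t‖ := by
          apply mul_le_mul_of_nonneg_right _ h2
          exact mul_le_mul_of_nonneg_right h1 (abs_nonneg _)
      _ = (Real.exp (lam.re * r * τ) * ∫ t : ℝ, ‖f t‖) * |g α k| := by ring
  -- interchange
  have hswap : ∫ t : ℝ, ∑' k, F k t = ∑' k, ∫ t : ℝ, F k t :=
    (MeasureTheory.integral_tsum_of_summable_integral_norm hFint hsum).symm
  -- compute each integral
  have hshift : ∀ a : ℝ, (∫ t : ℝ, Complex.exp (Complex.I * ω * t) * f (t - a))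
      = Complex.exp (Complex.I * ω * a) * fhat := by
    intro a
    have h1 : (∫ t : ℝ, Complex.exp (Complex.I * ω * t) * f (t - a))
        = ∫ t : ℝ, (fun s : ℝ => Complex.exp (Complex.I * ω * (s + a)) * f s) (t - a) := by
      congr 1
      ext t
      simp only []
      congr 2
      push_cast
      ring
    rw [h1, integral_sub_right_eq_self (fun s : ℝ => Complex.exp (Complex.I * ω * (s + a)) * f s) a]
    rw [hfhat, ← MeasureTheory.integral_const_mul]
    congr 1
    ext s
    rw [← mul_assoc, ← Complex.exp_add]
    push_cast
    ring_nf
  have hint : ∀ k, (∫ t : ℝ, F k t)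
      = (Complex.exp (-lam * ((k:ℝ) - r) * τ) * (g α k : ℂ) * Complex.exp (Complex.I * ω * (c k)))
        * fhat := by
    intro k
    rw [hF]
    simp only
    have : ∀ t : ℝ, Complex.exp (Complex.I * ω * t) * (Complex.exp (-lam * ((k : ℝ) - r) * τ)
        * (g α k : ℂ) * f (t - c k))
        = (Complex.exp (-lam * ((k:ℝ) - r) * τ) * (g α k : ℂ))
          * (Complex.exp (Complex.I * ω * t) * f (t - c k)) := fun t => by ring
    simp_rw [this]
    rw [MeasureTheory.integral_const_mul, hshift (c k)]
    ring
  -- the series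
  set x : ℂ := Complex.exp (-(u * τ)) with hx
  have hcoef : ∀ k : ℕ, Complex.exp (-lam * ((k:ℝ) - r) * τ) * (g α k : ℂ)
      * Complex.exp (Complex.I * ω * (c k))
      = Complex.exp (u * r * τ) * ((g α k : ℂ) * x ^ k) := by
    intro k
    simp only [hc]
    rw [mul_right_comm, mul_comm ((g α k : ℝ) : ℂ) (x ^ k), ← mul_assoc]
    congr 1
    rw [hx, ← Complex.exp_nat_mul, ← Complex.exp_add, ← Complex.exp_add]
    congr 1
    rw [hu]
    push_cast
    ring
  have hxnorm : ‖x‖ ≤ 1 := by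
    rw [hx, Complex.norm_exp]
    apply Real.exp_le_one_iff.2
    simp only [Complex.neg_re, Complex.mul_re, Complex.ofReal_re, Complex.ofReal_im, mul_zero,
      sub_zero, neg_nonpos]
    rw [hure] at *
    positivity
  have hts : ∑' k, (∫ t : ℝ, F k t)
      = Complex.exp (u * r * τ) * ((1 - x) ^ (α:ℂ)) * fhat := by
    simp_rw [hint, hcoef]
    rw [tsum_mul_right, tsum_mul_left, tsum_binomial hα0 hα1 x hxnorm]
    try ring
  -- put everything together
  rw [MeasureTheory.integral_congr_ae (Filter.Eventually.of_forall hpt),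
    MeasureTheory.integral_const_mul, hswap, hts]
  rw [W]
  have hαC : ((α:ℂ)) ≠ 0 := by exact_mod_cast hα0.ne'
  by_cases hu0 : u = 0
  · have hx1 : x = 1 := by rw [hx, hu0]; simp
    rw [hu0, hx1]
    simp only [sub_self]
    rw [Complex.zero_cpow hαC]
    ring
  · have hb := branch α hα0 hu0 (by rw [hure]; exact hlam) hτ
    rw [hx]
    calc (τ:ℂ) ^ (-(α:ℂ)) * (Complex.exp (u * r * τ) * (1 - Complex.exp (-(u*τ))) ^ (α:ℂ) * fhat)
        = ((τ:ℂ) ^ (-(α:ℂ)) * (1 - Complex.exp (-(u*τ))) ^ (α:ℂ)) * Complex.exp (u * r * τ) * fhat := by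
          ring
      _ = (u ^ (α:ℂ) * ((1 - Complex.exp (-(u*τ))) / (u*τ)) ^ (α:ℂ)) * Complex.exp (u * r * τ) * fhat := by
          rw [hb]
      _ = u ^ (α:ℂ) * (((1 - Complex.exp (-(u * ↑τ))) / (u * ↑τ)) ^ (α:ℂ) * Complex.exp (↑r * (u * ↑τ))) * fhat := by
          rw [show (↑r * (u * (τ:ℂ))) = u * r * τ by ring]
          ring
end

section
/- Let M ≥ 2, h > 0, and V_h the space of vectors v = (v_0,…,v_M) with v_0 = v_M = 0, inner product (u,v) = h ∑_{i=1}^{M-1} u_i v_i and norm ‖v‖ = √(v,v). With (A_x v)_i = (v_{i-1} + 10 v_i + v_{i+1})/12, for every v ∈ V_h: (2/3)‖v‖² ≤ (A_x v, v) ≤ ‖v‖². -/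
theorem stmt_16 (M : ℕ) (hM : 2 ≤ M) (h : ℝ) (hh : 0 < h)
    (v : ℕ → ℝ) (hv0 : v 0 = 0) (hvM : v M = 0) :
    (2 / 3) * (h * ∑ i ∈ Finset.Icc 1 (M - 1), (v i) ^ 2) ≤
        h * ∑ i ∈ Finset.Icc 1 (M - 1), ((v (i - 1) + 10 * v i + v (i + 1)) / 12) * v i ∧
      h * ∑ i ∈ Finset.Icc 1 (M - 1), ((v (i - 1) + 10 * v i + v (i + 1)) / 12) * v i ≤
        h * ∑ i ∈ Finset.Icc 1 (M - 1), (v i) ^ 2 := by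
  have hIcc : ∀ f : ℕ → ℝ, ∑ i ∈ Finset.Icc 1 (M - 1), f i
      = ∑ i ∈ Finset.range (M - 1), f (i + 1) := by
    intro f
    have : Finset.Icc 1 (M - 1) = Finset.Ico 1 M := by
      rw [← Finset.Ico_add_one_right_eq_Icc]; congr 1; omega
    rw [this, Finset.sum_Ico_eq_sum_range]
    exact Finset.sum_congr rfl fun i _ => by rw [add_comm]
  simp only [hIcc]
  set n := M - 1 with hn
  have hnM : n + 1 = M := by omega
  set T := ∑ i ∈ Finset.range n, (v (i + 1)) ^ 2 with hT
  set S1 := ∑ i ∈ Finset.range n, v i * v (i + 1) with hS1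
  set S2 := ∑ i ∈ Finset.range n, v (i + 1) * v (i + 2) with hS2
  set U := ∑ i ∈ Finset.range n, (v i) ^ 2 with hU
  have hS21 : S2 = S1 := by
    have h1 : ∑ i ∈ Finset.range (n + 1), v i * v (i + 1)
        = (∑ i ∈ Finset.range n, v (i + 1) * v (i + 1 + 1)) + v 0 * v 1 :=
      Finset.sum_range_succ' _ n
    have h2 : ∑ i ∈ Finset.range (n + 1), v i * v (i + 1)
        = S1 + v n * v (n + 1) := Finset.sum_range_succ _ n
    rw [hnM, hvM, hv0] at *
    simp only [zero_mul, mul_zero, add_zero] at h1 h2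
    rw [hS2]
    rw [h1] at h2
    convert h2 using 2
  have hUT : U ≤ T := by
    obtain ⟨m, hm⟩ : ∃ m, n = m + 1 := ⟨n - 1, by omega⟩
    rw [hU, hm, Finset.sum_range_succ' (fun i => (v i) ^ 2) m, hv0]
    simp only [ne_eq, OfNat.ofNat_ne_zero, not_false_eq_true, zero_pow, add_zero]
    rw [hT, hm]
    exact Finset.sum_le_sum_of_subset_of_nonneg
      (Finset.range_subset_range.2 (Nat.le_succ m)) (fun i _ _ => sq_nonneg _)
  have hA : ∑ i ∈ Finset.range n, ((v (i + 1 - 1) + 10 * v (i + 1) + v (i + 1 + 1)) / 12) * v (i + 1)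
      = (10 * T + S1 + S2) / 12 := by
    rw [hT, hS1, hS2, Finset.mul_sum, ← Finset.sum_add_distrib, ← Finset.sum_add_distrib,
      Finset.sum_div]
    exact Finset.sum_congr rfl fun i _ => by
      simp only [Nat.add_sub_cancel]; ring
  have hc1 : 0 ≤ U + T - 2 * S1 := by
    have : ∑ i ∈ Finset.range n, (v i - v (i + 1)) ^ 2 = U + T - 2 * S1 := by
      rw [hU, hT, hS1, Finset.mul_sum, ← Finset.sum_add_distrib, ← Finset.sum_sub_distrib]
      exact Finset.sum_congr rfl fun i _ => by ring
    rw [← this]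
    exact Finset.sum_nonneg fun i _ => sq_nonneg _
  have hc2 : 0 ≤ U + T + 2 * S1 := by
    have : ∑ i ∈ Finset.range n, (v i + v (i + 1)) ^ 2 = U + T + 2 * S1 := by
      rw [hU, hT, hS1, Finset.mul_sum, ← Finset.sum_add_distrib, ← Finset.sum_add_distrib]
      exact Finset.sum_congr rfl fun i _ => by ring
    rw [← this]
    exact Finset.sum_nonneg fun i _ => sq_nonneg _
  rw [hA, hS21]
  constructor
  · have key : (2 / 3) * T ≤ (10 * T + S1 + S1) / 12 := by linarith
    nlinarith [mul_le_mul_of_nonneg_left key hh.le]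
  · have key : (10 * T + S1 + S1) / 12 ≤ T := by linarith
    nlinarith [mul_le_mul_of_nonneg_left key hh.le]
end
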